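/- Let 0 ≤ λ₁ < λ₂, and suppose ε² > U_{λ₂}(r). Setting s₁ := √(ε² − U_{λ₁}(r)) and s₂ := √(ε² − U_{λ₂}(r)), one has the integral identity ∫_{λ₁}^{λ₂} λ³/√(ε² − U_λ(r)) dλ = (1/3)·(λ₂² − λ₁²)/(s₁ + s₂)² · [λ₁²(s₁ + 2s₂) + λ₂²(s₂ + 2s₁)]. -/

import Mathlib

open Real Filter Set Topology MeasureTheory intervalIntegral

/-- integral identity
`∫_{λ₁}^{λ₂} λ³/√(ε² − U_λ(r)) dλ
  = (1/3)·(λ₂² − λ₁²)/(s₁ + s₂)² · (λ₁²(s₁ + 2s₂) + λ₂²(s₂ + 2s₁))`, where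
`U_λ(r) = χ(r)(1 + λ²/r²)` and `sᵢ = √(ε² − U_{λᵢ}(r))`. -/
theorem stmt11
    (r χr ε lam₁ lam₂ : ℝ)
    (hr : 0 < r) (hχ : 0 < χr)
    (h1 : 0 ≤ lam₁) (h12 : lam₁ < lam₂)
    (hε : χr * (1 + lam₂ ^ 2 / r ^ 2) < ε ^ 2) :
    ∫ l in lam₁..lam₂, l ^ 3 / Real.sqrt (ε ^ 2 - χr * (1 + l ^ 2 / r ^ 2)) =
      (1 / 3) * (lam₂ ^ 2 - lam₁ ^ 2) /
        (Real.sqrt (ε ^ 2 - χr * (1 + lam₁ ^ 2 / r ^ 2)) +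
          Real.sqrt (ε ^ 2 - χr * (1 + lam₂ ^ 2 / r ^ 2))) ^ 2 *
        (lam₁ ^ 2 * (Real.sqrt (ε ^ 2 - χr * (1 + lam₁ ^ 2 / r ^ 2)) +
            2 * Real.sqrt (ε ^ 2 - χr * (1 + lam₂ ^ 2 / r ^ 2))) +
         lam₂ ^ 2 * (Real.sqrt (ε ^ 2 - χr * (1 + lam₂ ^ 2 / r ^ 2)) +
            2 * Real.sqrt (ε ^ 2 - χr * (1 + lam₁ ^ 2 / r ^ 2)))) := by
  have hr2 : (0:ℝ) < r ^ 2 := by positivity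
  set b := χr / r ^ 2 with hb
  have hbpos : 0 < b := by positivity
  set a := ε ^ 2 - χr with ha
  have key : ∀ l : ℝ, ε ^ 2 - χr * (1 + l ^ 2 / r ^ 2) = a - b * l ^ 2 := by
    intro l
    rw [ha, hb]
    field_simp
    ring
  have hpos : ∀ l ∈ Set.Icc lam₁ lam₂, 0 < a - b * l ^ 2 := by
    intro l hl
    have h2 : 0 < a - b * lam₂ ^ 2 := by rw [← key]; linarith
    have hl2 : l ^ 2 ≤ lam₂ ^ 2 := by nlinarith [hl.1, hl.2]
    nlinarith
  -- antiderivative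
  set F : ℝ → ℝ := fun l => -(1 / (3 * b ^ 2)) * (Real.sqrt (a - b * l ^ 2) * (2 * a + b * l ^ 2))
    with hF
  have hderiv : ∀ l ∈ Set.Icc lam₁ lam₂,
      HasDerivAt F (l ^ 3 / Real.sqrt (a - b * l ^ 2)) l := by
    intro l hl
    have hq : 0 < a - b * l ^ 2 := hpos l hl
    have hs : 0 < Real.sqrt (a - b * l ^ 2) := Real.sqrt_pos.mpr hq
    have hg : HasDerivAt (fun x : ℝ => a - b * x ^ 2) (-(b * (2 * l))) l := by
      simpa using ((hasDerivAt_pow 2 l).const_mul b).const_sub a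
    have hsq : HasDerivAt (fun x : ℝ => Real.sqrt (a - b * x ^ 2))
        (1 / (2 * Real.sqrt (a - b * l ^ 2)) * (-(b * (2 * l)))) l :=
      (Real.hasDerivAt_sqrt (ne_of_gt hq)).comp l hg
    have hp : HasDerivAt (fun x : ℝ => 2 * a + b * x ^ 2) (b * (2 * l)) l := by
      simpa using ((hasDerivAt_pow 2 l).const_mul b).const_add (2 * a)
    have := ((hsq.mul hp).const_mul (-(1 / (3 * b ^ 2))))
    refine this.congr_deriv ?_
    have hs2 : Real.sqrt (a - b * l ^ 2) ^ 2 = a - b * l ^ 2 := Real.sq_sqrt hq.le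
    have hLS : l ^ 3 / Real.sqrt (a - b * l ^ 2)
        = l ^ 3 * Real.sqrt (a - b * l ^ 2) / (a - b * l ^ 2) := by
      rw [div_eq_div_iff hs.ne' hq.ne']; linear_combination (-(l ^ 3)) * hs2
    have hinv : (1 : ℝ) / (2 * Real.sqrt (a - b * l ^ 2))
        = Real.sqrt (a - b * l ^ 2) / (2 * (a - b * l ^ 2)) := by
      rw [div_eq_div_iff (by positivity) (by positivity)]
      linear_combination (-2 : ℝ) * hs2
    rw [hLS, hinv]
    field_simp
    ring
  have hcont : ContinuousOn (fun l : ℝ => l ^ 3 / Real.sqrt (a - b * l ^ 2))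
      (Set.Icc lam₁ lam₂) := by
    apply ContinuousOn.div
    · exact (continuous_pow 3).continuousOn
    · exact (Real.continuous_sqrt.comp (by continuity)).continuousOn
    · intro l hl
      exact (Real.sqrt_pos.mpr (hpos l hl)).ne'
  have huIcc : Set.uIcc lam₁ lam₂ = Set.Icc lam₁ lam₂ := Set.uIcc_of_le h12.le
  have hint : IntervalIntegrable (fun l : ℝ => l ^ 3 / Real.sqrt (a - b * l ^ 2))
      MeasureTheory.volume lam₁ lam₂ :=
    (hcont.mono (by rw [huIcc])).intervalIntegrable
  have heval : ∫ l in lam₁..lam₂, l ^ 3 / Real.sqrt (a - b * l ^ 2) = F lam₂ - F lam₁ :=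
    intervalIntegral.integral_eq_sub_of_hasDerivAt
      (fun l hl => hderiv l (by rwa [← huIcc])) hint
  simp only [key]
  rw [heval, hF]
  -- now pure algebra
  set s₁ := Real.sqrt (a - b * lam₁ ^ 2) with hs₁def
  set s₂ := Real.sqrt (a - b * lam₂ ^ 2) with hs₂def
  have hq₁ : 0 < a - b * lam₁ ^ 2 := hpos lam₁ ⟨le_refl _, h12.le⟩
  have hq₂ : 0 < a - b * lam₂ ^ 2 := hpos lam₂ ⟨h12.le, le_refl _⟩
  have hs₁ : 0 < s₁ := Real.sqrt_pos.mpr hq₁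
  have hs₂ : 0 < s₂ := Real.sqrt_pos.mpr hq₂
  have hsq₁ : s₁ ^ 2 = a - b * lam₁ ^ 2 := Real.sq_sqrt hq₁.le
  have hsq₂ : s₂ ^ 2 = a - b * lam₂ ^ 2 := Real.sq_sqrt hq₂.le
  have hrel : s₁ ^ 2 - s₂ ^ 2 = b * (lam₂ ^ 2 - lam₁ ^ 2) := by rw [hsq₁, hsq₂]; ring
  have hss : 0 < s₁ + s₂ := by linarith
  have G0 : (s₁ + s₂) ^ 2 * (2 * s₁ ^ 3 + 3 * b * lam₁ ^ 2 * s₁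
        - 2 * s₂ ^ 3 - 3 * b * lam₂ ^ 2 * s₂)
      = b * (s₁ ^ 2 - s₂ ^ 2) *
        (lam₁ ^ 2 * (s₁ + 2 * s₂) + lam₂ ^ 2 * (s₂ + 2 * s₁)) := by
    linear_combination (3 * s₂ * (s₁ + s₂) ^ 2 + (s₁ ^ 2 - s₂ ^ 2) * (s₂ + 2 * s₁)) * hrel
  have hlam : lam₂ ^ 2 - lam₁ ^ 2 = (s₁ ^ 2 - s₂ ^ 2) / b := by
    rw [eq_div_iff hbpos.ne']; linarith [hrel]
  calc -(1 / (3 * b ^ 2)) * (s₂ * (2 * a + b * lam₂ ^ 2))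
        - -(1 / (3 * b ^ 2)) * (s₁ * (2 * a + b * lam₁ ^ 2))
      = (2 * s₁ ^ 3 + 3 * b * lam₁ ^ 2 * s₁ - 2 * s₂ ^ 3 - 3 * b * lam₂ ^ 2 * s₂)
          / (3 * b ^ 2) := by
        have e₁ : 2 * a + b * lam₁ ^ 2 = 2 * s₁ ^ 2 + 3 * b * lam₁ ^ 2 := by
          rw [hsq₁]; ring
        have e₂ : 2 * a + b * lam₂ ^ 2 = 2 * s₂ ^ 2 + 3 * b * lam₂ ^ 2 := by
          rw [hsq₂]; ring
        rw [e₁, e₂]; ring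
    _ = b * (s₁ ^ 2 - s₂ ^ 2) *
          (lam₁ ^ 2 * (s₁ + 2 * s₂) + lam₂ ^ 2 * (s₂ + 2 * s₁))
          / ((s₁ + s₂) ^ 2 * (3 * b ^ 2)) := by
        rw [div_eq_div_iff (by positivity) (by positivity)]
        linear_combination (3 * b ^ 2) * G0
    _ = 1 / 3 * (lam₂ ^ 2 - lam₁ ^ 2) / (s₁ + s₂) ^ 2 *
          (lam₁ ^ 2 * (s₁ + 2 * s₂) + lam₂ ^ 2 * (s₂ + 2 * s₁)) := by
        rw [hlam]
        field_simp
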